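/- For every natural number n, the following identity holds in ℚ[x]: B_n^F(x) + F_n·x^{n−1} = ∑_{k=0}^{n} [n choose k]_F · B_{n−k}^F(x) (for n = 0 the term F_n·x^{n−1} is understood as 0 since F_0 = 0). -/

import Mathlib

/-- The fibofactorial: `F_n! = F_1 * F_2 * ... * F_n`, with `F_0! = 1`. -/
def fibFact (n : ℕ) : ℕ := ∏ i ∈ Finset.range n, Nat.fib (i + 1)

/-- The Fibonomial coefficient `[n choose k]_F = F_n! / (F_k! * F_{n-k}!)` as a rational. -/
def fibonomial (n k : ℕ) : ℚ := (fibFact n : ℚ) / ((fibFact k : ℚ) * (fibFact (n - k) : ℚ))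


lemma fibFact_pos (n : ℕ) : 0 < fibFact n :=
  Finset.prod_pos fun i _ => Nat.fib_pos.2 (Nat.succ_pos i)

lemma fibFact_ne_zero (n : ℕ) : (fibFact n : ℚ) ≠ 0 := by
  exact_mod_cast (fibFact_pos n).ne'

lemma fibFact_succ (m : ℕ) : (fibFact (m+1) : ℚ) = fibFact m * Nat.fib (m+1) := by
  rw [fibFact, Finset.prod_range_succ]; push_cast [fibFact]; ring

open Polynomial Finset

/-- For every `n`, `B_n^F(x) + F_n * x^{n-1} = ∑_{k=0}^{n} [n choose k]_F * B_{n-k}^F(x)`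
in `ℚ[x]` (for `n = 0` the term `F_n * x^{n-1}` vanishes since `F_0 = 0`). Here `B` is the
(unique) sequence of Bernoulli–Fibonacci polynomials, characterized by the
generating-function identity
`(∑ B_n(x) z^n/F_n!) * (∑_{n≥1} z^n/F_n!) = z * ∑ x^n z^n/F_n!` in `(ℚ[x])⟦z⟧`. -/
theorem bernoulliFib_H_expansion
    (B : ℕ → Polynomial ℚ)
    (hB : (PowerSeries.mk fun n => Polynomial.C ((fibFact n : ℚ)⁻¹) * B n) *
          (PowerSeries.mk fun n =>
            if n = 0 then 0 else Polynomial.C ((fibFact n : ℚ)⁻¹)) =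
          PowerSeries.X *
          PowerSeries.mk (fun n => Polynomial.C ((fibFact n : ℚ)⁻¹) * Polynomial.X ^ n))
    (n : ℕ) :
    B n + Polynomial.C ((Nat.fib n : ℚ)) * Polynomial.X ^ (n - 1) =
      ∑ k ∈ Finset.range (n + 1), Polynomial.C (fibonomial n k) * B (n - k) := by
  rcases n with _ | m
  · simp [fibonomial, fibFact]
  · have h := congrArg (PowerSeries.coeff (R := Polynomial ℚ) (m+1)) hB
    rw [PowerSeries.coeff_mul, Finset.Nat.sum_antidiagonal_eq_sum_range_succ_mk] at h
    simp only [PowerSeries.coeff_mk, PowerSeries.coeff_succ_X_mul] at h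
    rw [Finset.sum_range_succ] at h
    simp only [Nat.sub_self, if_true, mul_zero, add_zero] at h
    have h' : ∀ k ∈ Finset.range (m+1),
        (C ((fibFact k : ℚ))⁻¹ * B k) * (if m+1-k = 0 then 0 else C ((fibFact (m+1-k) : ℚ))⁻¹)
        = C ((fibFact k : ℚ))⁻¹ * C ((fibFact (m+1-k) : ℚ))⁻¹ * B k := by
      intro k hk
      have hk' := Finset.mem_range.mp hk
      rw [if_neg (by omega)]; ring
    rw [Finset.sum_congr rfl h'] at h
    -- goal RHS
    rw [← Finset.sum_range_reflect]
    simp only [Nat.add_sub_cancel]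
    have h2 : ∀ j ∈ Finset.range (m+2),
        C (fibonomial (m+1) (m+1-j)) * B (m+1-(m+1-j))
        = C ((fibFact (m+1) : ℚ)) * (C ((fibFact j : ℚ))⁻¹ * C ((fibFact (m+1-j) : ℚ))⁻¹ * B j) := by
      intro j hj
      have hj' : j ≤ m + 1 := by simpa using Nat.lt_succ_iff.mp (Finset.mem_range.mp hj)
      have e1 : m + 1 - (m + 1 - j) = j := by omega
      rw [e1, fibonomial, e1, div_eq_mul_inv, mul_inv, map_mul, map_mul]
      ring
    have e1 : C ((fibFact (m+1):ℚ)) * (C ((fibFact (m+1):ℚ))⁻¹ * C ((fibFact 0:ℚ))⁻¹ * B (m+1)) = B (m+1) := by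
      have h0 : (fibFact 0 : ℚ) = 1 := by simp [fibFact]
      rw [h0, inv_one, map_one, mul_one, ← mul_assoc, ← map_mul,
        mul_inv_cancel₀ (fibFact_ne_zero _), map_one, one_mul]
    have e2 : C ((fibFact (m+1):ℚ)) * (C ((fibFact m:ℚ))⁻¹ * Polynomial.X ^ m) = C ((Nat.fib (m+1):ℚ)) * Polynomial.X ^ m := by
      rw [← mul_assoc, ← map_mul, fibFact_succ, mul_comm ((fibFact m : ℚ)), mul_assoc,
        mul_inv_cancel₀ (fibFact_ne_zero m), mul_one]
    rw [Finset.sum_congr rfl h2, Finset.sum_range_succ, ← Finset.mul_sum, h]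
    simp only [Nat.sub_self]
    rw [e2, e1]
    exact add_comm _ _
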